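/- In ZF, a topological space X is compact if and only if for every topological space Y, the projection π_Y : X × Y → Y (with X × Y given the product topology) is a closed map. -/

import Mathlib

universe u

/-- The Mrówka topology on `Option X` associated to a filter `f` on `X`:
points of `X` are isolated, and neighborhoods of `none` are generated by `f`. -/
def mrowkaTop (X : Type u) (f : Filter X) : TopologicalSpace (Option X) where
  IsOpen U := none ∈ U → ∃ A ∈ f, (some '' A : Set (Option X)) ⊆ U
  isOpen_univ := fun _ => ⟨Set.univ, Filter.univ_mem, Set.subset_univ _⟩
  isOpen_inter := by
    rintro U V hU hV ⟨hnU, hnV⟩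
    obtain ⟨A, hA, hAU⟩ := hU hnU
    obtain ⟨B, hB, hBV⟩ := hV hnV
    exact ⟨A ∩ B, Filter.inter_mem hA hB,
      fun y hy => ⟨hAU (Set.image_mono Set.inter_subset_left hy),
        hBV (Set.image_mono Set.inter_subset_right hy)⟩⟩
  isOpen_sUnion := by
    rintro S hS hn
    obtain ⟨U, hUS, hnU⟩ := Set.mem_sUnion.1 hn
    obtain ⟨A, hA, hAU⟩ := hS U hUS hnU
    exact ⟨A, hA, fun y hy => Set.mem_sUnion.2 ⟨U, hUS, hAU hy⟩⟩

/-- Kuratowski–Mrówka: a topological space `X` is compact iff for every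
topological space `Y` the projection `X × Y → Y` is a closed map. -/
theorem stmt_9 (X : Type u) [TopologicalSpace X] :
    CompactSpace X ↔
      ∀ (Y : Type u) [TopologicalSpace Y], IsClosedMap (Prod.snd : X × Y → Y) := by
  constructor
  · intro _ Y _
    exact isClosedMap_snd_of_compactSpace
  · intro h
    constructor
    intro f hf _
    letI t : TopologicalSpace (Option X) := mrowkaTop X f
    set D : Set (X × Option X) := {p | p.2 = some p.1} with hD
    have hclosed : IsClosed (Prod.snd '' closure D) := h (Option X) _ isClosed_closure
    -- `none` is in the image of the closure
    have hnone : (none : Option X) ∈ Prod.snd '' closure D := by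
      by_contra hcon
      have hopen : IsOpen (Prod.snd '' closure D)ᶜ := hclosed.isOpen_compl
      obtain ⟨A, hA, hAsub⟩ := hopen hcon
      obtain ⟨a, ha⟩ := Filter.nonempty_of_mem hA
      exact hAsub ⟨a, ha, rfl⟩ ⟨(a, some a), subset_closure rfl, rfl⟩
    obtain ⟨⟨x, y⟩, hxy, hy⟩ := hnone
    simp only at hy; subst hy
    refine ⟨x, Set.mem_univ x, clusterPt_iff_nonempty.2 ?_⟩
    intro U hU A hA
    obtain ⟨U', hU'sub, hU'open, hxU'⟩ := mem_nhds_iff.1 hU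
    have hVopen : IsOpen ({none} ∪ some '' A : Set (Option X)) := by
      intro _
      exact ⟨A, hA, fun y hy => Or.inr hy⟩
    have hprod : IsOpen (U' ×ˢ ({none} ∪ some '' A : Set (Option X))) :=
      hU'open.prod hVopen
    have hmem : (x, (none : Option X)) ∈ U' ×ˢ ({none} ∪ some '' A : Set (Option X)) :=
      ⟨hxU', Or.inl rfl⟩
    obtain ⟨p, hpS, hpD⟩ := mem_closure_iff.1 hxy _ hprod hmem
    have hab : p.2 = some p.1 := hpD
    rcases hpS with ⟨haU, hbV⟩
    rw [hab] at hbV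
    rcases hbV with hbV | ⟨a', ha', haa'⟩
    · simp at hbV
    · obtain rfl : a' = p.1 := Option.some_injective _ haa'
      exact ⟨p.1, hU'sub haU, ha'⟩
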